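/- Let N(v) = Σ_{j∈J} m_j·|D(v,w_j)| be a norm of Culler–Shalen type on ℝ² in which w_j = (p_j, q_j) with q_j ≥ 1 for every j ∈ J, and assume there exist j, k ∈ J with D(w_j,w_k) ≠ 0. Let μ = (1,0), and suppose β = (a,b) equals w_{j₀} for some j₀ ∈ J (so b = q_{j₀} ≥ 1). Then max_{j∈J} (p_j/q_j) − min_{j∈J} (p_j/q_j) > N(β)/(b·N(μ)). -/
import Mathlib


/-- `D(v,w) = v₁w₂ − v₂w₁` for `v, w ∈ ℝ²`. -/
noncomputable def Dd (v w : ℝ × ℝ) : ℝ := v.1 * w.2 - v.2 * w.1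

/-- Inclusion of the lattice `ℤ²` into `ℝ²`. -/
def toR (w : ℤ × ℤ) : ℝ × ℝ := ((w.1 : ℝ), (w.2 : ℝ))

/-- For a norm of Culler–Shalen type `N(v) = Σ_j m_j·|D(v,w_j)|` in
which every `w_j = (p_j, q_j)` has `q_j ≥ 1` (i.e. `∞` is not a boundary slope),
with some `D(w_j,w_k) ≠ 0`, if `β = (a,b)` equals `w_{j₀}` for some `j₀`, then the
diameter of the set of slopes `p_j/q_j` exceeds `N(β)/(b·N(μ))`, where `μ = (1,0)`. -/
theorem diameter_of_boundary_slopes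
    {J : Type*} [Fintype J] [Nonempty J]
    (m : J → ℝ) (hm : ∀ j, 0 < m j)
    (w : J → ℤ × ℤ) (hw : ∀ j, Int.gcd (w j).1 (w j).2 = 1)
    (hq : ∀ j, 1 ≤ (w j).2)
    (hnorm : ∃ j k, Dd (toR (w j)) (toR (w k)) ≠ 0)
    (N : (ℝ × ℝ) → ℝ) (hN : ∀ v, N v = ∑ j, m j * |Dd v (toR (w j))|)
    (a b : ℤ) (j₀ : J) (hβ : w j₀ = (a, b)) :
    N (toR (a, b)) / ((b : ℝ) * N (toR (1, 0))) <
      Finset.univ.sup' Finset.univ_nonempty (fun j => ((w j).1 : ℝ) / ((w j).2 : ℝ)) -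
        Finset.univ.inf' Finset.univ_nonempty (fun j => ((w j).1 : ℝ) / ((w j).2 : ℝ)) := by
  classical
  set s : J → ℝ := fun j => ((w j).1 : ℝ) / ((w j).2 : ℝ) with hs
  set U := Finset.univ.sup' Finset.univ_nonempty s with hU
  set L := Finset.univ.inf' Finset.univ_nonempty s with hL
  have hqR : ∀ j, (0:ℝ) < ((w j).2 : ℝ) := fun j => by
    exact_mod_cast lt_of_lt_of_le zero_lt_one (hq j)
  have hbZ : (1:ℤ) ≤ b := by have := hq j₀; rw [hβ] at this; exact this
  have hbR : (0:ℝ) < (b:ℝ) := by exact_mod_cast lt_of_lt_of_le zero_lt_one hbZ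
  have hsU : ∀ j, s j ≤ U := fun j => Finset.le_sup' s (Finset.mem_univ j)
  have hLs : ∀ j, L ≤ s j := fun j => Finset.inf'_le s (Finset.mem_univ j)
  -- diameter positive
  have hdiam : 0 < U - L := by
    obtain ⟨j, k, hjk⟩ := hnorm
    have hne : s j ≠ s k := by
      intro h
      apply hjk
      have : ((w j).1 : ℝ) * ((w k).2 : ℝ) = ((w k).1 : ℝ) * ((w j).2 : ℝ) :=
        (div_eq_div_iff (ne_of_gt (hqR j)) (ne_of_gt (hqR k))).mp h
      simp only [Dd, toR]
      linarith
    rcases lt_or_gt_of_ne hne with h | h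
    · have := hsU k; have := hLs j; linarith
    · have := hsU j; have := hLs k; linarith
  -- N(μ)
  have hNμ : N (toR (1, 0)) = ∑ j, m j * ((w j).2 : ℝ) := by
    rw [hN]
    refine Finset.sum_congr rfl fun j _ => ?_
    have : Dd (toR (1, 0)) (toR (w j)) = ((w j).2 : ℝ) := by
      simp [Dd, toR]
    rw [this, abs_of_pos (hqR j)]
  have hNμpos : 0 < N (toR (1, 0)) := by
    rw [hNμ]
    exact Finset.sum_pos (fun j _ => mul_pos (hm j) (hqR j)) Finset.univ_nonempty
  -- slope at j₀
  have hsj₀ : s j₀ = (a:ℝ) / (b:ℝ) := by simp [hs, hβ]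
  -- termwise rewriting of |D(β, w_j)|
  have habs : ∀ j, |Dd (toR (a, b)) (toR (w j))| = (b:ℝ) * ((w j).2 : ℝ) * |s j₀ - s j| := by
    intro j
    have h1 : Dd (toR (a, b)) (toR (w j)) = ((b:ℝ) * ((w j).2 : ℝ)) * (s j₀ - s j) := by
      have hb0 : (b:ℝ) ≠ 0 := ne_of_gt hbR
      have hq0 : ((w j).2 : ℝ) ≠ 0 := ne_of_gt (hqR j)
      simp only [Dd, toR, hs, hβ]
      field_simp
    rw [h1, abs_mul, abs_of_pos (mul_pos hbR (hqR j))]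
  -- main strict sum inequality
  have hkey : N (toR (a, b)) < ∑ j, m j * ((w j).2 : ℝ) * ((b:ℝ) * (U - L)) := by
    rw [hN]
    refine Finset.sum_lt_sum (fun j _ => ?_) ⟨j₀, Finset.mem_univ j₀, ?_⟩
    · rw [habs j]
      have hd : |s j₀ - s j| ≤ U - L := by
        rw [abs_sub_le_iff]
        constructor
        · have := hsU j₀; have := hLs j; linarith
        · have := hsU j; have := hLs j₀; linarith
      have : (b:ℝ) * ((w j).2 : ℝ) * |s j₀ - s j| ≤ (b:ℝ) * ((w j).2 : ℝ) * (U - L) :=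
        mul_le_mul_of_nonneg_left hd (le_of_lt (mul_pos hbR (hqR j)))
      calc m j * ((b:ℝ) * ((w j).2 : ℝ) * |s j₀ - s j|)
          ≤ m j * ((b:ℝ) * ((w j).2 : ℝ) * (U - L)) :=
            mul_le_mul_of_nonneg_left this (le_of_lt (hm j))
        _ = m j * ((w j).2 : ℝ) * ((b:ℝ) * (U - L)) := by ring
    · rw [habs j₀]
      have : |s j₀ - s j₀| = 0 := by simp
      rw [this, mul_zero, mul_zero]
      exact mul_pos (mul_pos (hm j₀) (hqR j₀)) (mul_pos hbR hdiam)
  rw [div_lt_iff₀ (mul_pos hbR hNμpos)]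
  calc N (toR (a, b)) < ∑ j, m j * ((w j).2 : ℝ) * ((b:ℝ) * (U - L)) := hkey
    _ = (U - L) * ((b:ℝ) * N (toR (1, 0))) := by
        rw [hNμ, Finset.mul_sum, Finset.mul_sum]
        exact Finset.sum_congr rfl fun j _ => by ring
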